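/- For the state ρ_x = x|ψ⟩⟨ψ| + ((1−x)/32)I₃₂ on (ℂ²)^{⊗5} with |ψ⟩ = (|00000⟩+|11111⟩)/√2, the five-body correlation tensor satisfies ‖T^{(12345)}‖² = 16x². Consequently, ρ_x is not 1-1-1-1-1 separable whenever x > 1/4, not 1-1-3 separable whenever x > 1/2, not 1-4 or 1-2-2 separable whenever x > 3/4, and not 2-3 separable whenever x > √3/2. -/

import Mathlib

open Matrix BigOperators
open scoped ComplexOrder

/-- The Pauli matrices, an orthogonal basis of su(2) with tr(σᵢσⱼ) = 2δᵢⱼ. -/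
noncomputable def pauli : Fin 3 → Matrix (Fin 2) (Fin 2) ℂ :=
  ![!![0, 1; 1, 0], !![0, -Complex.I; Complex.I, 0], !![1, 0; 0, -1]]

/-- The 5-qubit GHZ state vector (|00000⟩ + |11111⟩)/√2. -/
noncomputable def ghz5 : (Fin 5 → Fin 2) → ℂ :=
  fun v => if (v = fun _ => 0) ∨ (v = fun _ => 1) then ((1 / Real.sqrt 2 : ℝ) : ℂ) else 0

/-- The noisy 5-qubit GHZ state ρ_x = x|ψ⟩⟨ψ| + ((1−x)/32)I₃₂. -/
noncomputable def rhoX5 (x : ℝ) : Matrix (Fin 5 → Fin 2) (Fin 5 → Fin 2) ℂ :=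
  (x : ℂ) • Matrix.vecMulVec ghz5 (star ghz5) +
    (((1 - x) / 32 : ℝ) : ℂ) • (1 : Matrix (Fin 5 → Fin 2) (Fin 5 → Fin 2) ℂ)

/-- Squared Frobenius norm of the full 5-body Pauli correlation tensor. -/
noncomputable def corrSq5 (σ : Matrix (Fin 5 → Fin 2) (Fin 5 → Fin 2) ℂ) : ℝ :=
  ∑ i : Fin 5 → Fin 3,
    (Complex.re ((σ * Matrix.of fun (x y : Fin 5 → Fin 2) =>
      ∏ s, pauli (i s) (x s) (y s)).trace)) ^ 2

/-- A 5-qubit state is a (pure-state) product across the partition given by the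
block assignment `P`. -/
def ProdAcross {k : ℕ} (P : Fin 5 → Fin k)
    (σ : Matrix (Fin 5 → Fin 2) (Fin 5 → Fin 2) ℂ) : Prop :=
  ∃ ρB : (t : Fin k) → Matrix ({s : Fin 5 // P s = t} → Fin 2) ({s : Fin 5 // P s = t} → Fin 2) ℂ,
    (∀ t, (ρB t).PosSemidef ∧ (ρB t).trace = 1) ∧
    ∀ x y, σ x y = ∏ t, ρB t (fun s => x s.1) (fun s => y s.1)

/-- A 5-qubit state is separable across the partition given by `P`: it is a convex
mixture of pure states, each a product across `P`. -/
def SepAcross {k : ℕ} (P : Fin 5 → Fin k)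
    (ρ : Matrix (Fin 5 → Fin 2) (Fin 5 → Fin 2) ℂ) : Prop :=
  ∃ (N : ℕ) (p : Fin N → ℝ) (φ : Fin N → Matrix (Fin 5 → Fin 2) (Fin 5 → Fin 2) ℂ),
    (∀ i, 0 ≤ p i) ∧ ∑ i, p i = 1 ∧
    (∀ i, (φ i).PosSemidef ∧ (φ i).trace = 1 ∧ φ i * φ i = φ i ∧ ProdAcross P (φ i)) ∧
    ρ = ∑ i, (p i : ℂ) • φ i

/-- The multiset of block sizes of the partition given by `P`. -/
def blockSizes {k : ℕ} (P : Fin 5 → Fin k) : Multiset ℕ :=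
  Finset.univ.val.map fun t : Fin k => Fintype.card {s : Fin 5 // P s = t}

namespace GhzAux

abbrev V := Fin 5 → Fin 2

def av : V := fun _ => 0
def bv : V := fun _ => 1

lemma av_ne_bv : av ≠ bv := by
  intro h
  have := congrFun h 0
  simp [av, bv] at this

noncomputable def cst : ℂ := ((1 / Real.sqrt 2 : ℝ) : ℂ)

lemma cst_sq : cst * cst = 1 / 2 := by
  rw [cst, ← Complex.ofReal_mul]
  have : (1 / Real.sqrt 2) * (1 / Real.sqrt 2) = 1 / 2 := by
    rw [div_mul_div_comm, one_mul, Real.mul_self_sqrt (by norm_num : (0:ℝ) ≤ 2)]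
  rw [this]; norm_num

lemma ghz5_av : ghz5 av = cst := by unfold ghz5 av cst; simp

lemma ghz5_bv : ghz5 bv = cst := by unfold ghz5 bv cst; simp

lemma ghz5_eq (v : V) : ghz5 v = if v = av then cst else if v = bv then cst else 0 := by
  unfold ghz5 av bv
  by_cases h1 : v = (fun _ => (0 : Fin 2)) <;> by_cases h2 : v = (fun _ => (1 : Fin 2)) <;>
    simp [h1, h2, cst]

lemma star_ghz5 : star ghz5 = ghz5 := by
  funext v
  simp only [Pi.star_apply, ghz5]
  split <;> simp [Complex.star_def, Complex.conj_ofReal]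

lemma sum_ghz5_mul (G : V → ℂ) :
    ∑ v, ghz5 v * G v = cst * (G av + G bv) := by
  have key : ∀ v : V, ghz5 v * G v =
      (if v = av then cst * G v else 0) + (if v = bv then cst * G v else 0) := by
    intro v
    rw [ghz5_eq]
    by_cases h1 : v = av
    · subst h1; simp [av_ne_bv]
    · by_cases h2 : v = bv
      · subst h2; simp [h1]
      · simp [h1, h2]
  rw [Finset.sum_congr rfl (fun v _ => key v), Finset.sum_add_distrib,
    Finset.sum_ite_eq' Finset.univ av (fun v => cst * G v),
    Finset.sum_ite_eq' Finset.univ bv (fun v => cst * G v)]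
  simp [mul_add]


lemma trace_mul_ghzP (M : Matrix V V ℂ) :
    (M * vecMulVec ghz5 (star ghz5)).trace
      = (1 / 2 : ℂ) * (M av av + M av bv + M bv av + M bv bv) := by
  have h1 : (M * vecMulVec ghz5 (star ghz5)).trace
      = ∑ v : V, ghz5 v * (∑ w : V, ghz5 w * M v w) := by
    rw [Matrix.trace]
    simp only [Matrix.diag_apply, Matrix.mul_apply, Matrix.vecMulVec_apply, star_ghz5]
    apply Finset.sum_congr rfl
    intro v _
    rw [Finset.mul_sum]
    apply Finset.sum_congr rfl
    intro w _
    ring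
  rw [h1, sum_ghz5_mul (fun v => ∑ w : V, ghz5 w * M v w),
    sum_ghz5_mul (fun w => M av w), sum_ghz5_mul (fun w => M bv w)]
  have hc : cst ^ 2 = 1 / 2 := by rw [sq, cst_sq]
  ring_nf
  rw [hc]
  ring

lemma trace_ghzP : (vecMulVec ghz5 (star ghz5)).trace = 1 := by
  rw [Matrix.trace]
  simp only [Matrix.diag_apply, Matrix.vecMulVec_apply, star_ghz5]
  rw [show (∑ v : V, ghz5 v * ghz5 v) = cst * (ghz5 av + ghz5 bv) from sum_ghz5_mul ghz5,
    ghz5_av, ghz5_bv]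
  calc cst * (cst + cst) = (cst * cst) * 2 := by ring
    _ = 1 := by rw [cst_sq]; norm_num

lemma trace_rho_mul (x : ℝ) (M : Matrix V V ℂ) :
    (rhoX5 x * M).trace
      = (x : ℂ) * ((1 / 2 : ℂ) * (M av av + M av bv + M bv av + M bv bv))
        + (((1 - x) / 32 : ℝ) : ℂ) * M.trace := by
  rw [rhoX5, add_mul, smul_mul_assoc, smul_mul_assoc, one_mul, trace_add, trace_smul, trace_smul,
    trace_mul_comm, trace_mul_ghzP]
  simp [smul_eq_mul]


lemma pauli_diag_sum (j : Fin 3) : pauli j 0 0 + pauli j 1 1 = 0 := by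
  fin_cases j <;> simp [pauli]

lemma pauli00 (j : Fin 3) (h : j ≠ 2) : pauli j 0 0 = 0 := by
  fin_cases j <;> simp_all [pauli]

lemma pauli11 (j : Fin 3) (h : j ≠ 2) : pauli j 1 1 = 0 := by
  fin_cases j <;> simp_all [pauli]

lemma pauli01 (j : Fin 3) (h : j ≠ 2) :
    pauli j 0 1 = if j = 1 then -Complex.I else 1 := by
  fin_cases j <;> simp_all [pauli]

lemma pauli10 (j : Fin 3) (h : j ≠ 2) :
    pauli j 1 0 = if j = 1 then Complex.I else 1 := by
  fin_cases j <;> simp_all [pauli]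

lemma pauli01_two : pauli 2 0 1 = 0 := by simp [pauli]
lemma pauli10_two : pauli 2 1 0 = 0 := by simp [pauli]
lemma pauli00_two : pauli 2 0 0 = 1 := by simp [pauli]
lemma pauli11_two : pauli 2 1 1 = -1 := by simp [pauli]

/-- trace of a tensor-product matrix of Paulis vanishes -/
lemma trace_pauliProd (i : Fin 5 → Fin 3) :
    (Matrix.of fun (x y : V) => ∏ s, pauli (i s) (x s) (y s)).trace = 0 := by
  rw [Matrix.trace]
  simp only [Matrix.diag_apply, Matrix.of_apply]
  rw [← Fintype.prod_sum (fun s (a : Fin 2) => pauli (i s) a a)]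
  apply Finset.prod_eq_zero (Finset.mem_univ (0 : Fin 5))
  rw [Fin.sum_univ_two]
  exact pauli_diag_sum (i 0)


lemma corr_entry (x : ℝ) (i : Fin 5 → Fin 3) :
    (Complex.re ((rhoX5 x * Matrix.of fun (x y : V) =>
        ∏ s, pauli (i s) (x s) (y s)).trace)) ^ 2
      = x ^ 2 * (if (∀ s, i s ≠ 2) ∧ Even ((Finset.univ.filter fun s => i s = 1).card)
          then 1 else 0) := by
  set M := Matrix.of fun (x y : V) => ∏ s, pauli (i s) (x s) (y s) with hM
  have htr : (rhoX5 x * M).trace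
      = (x : ℂ) * ((1 / 2 : ℂ) * (M av av + M av bv + M bv av + M bv bv)) := by
    rw [trace_rho_mul, trace_pauliProd, mul_zero, add_zero]
  have hMaa : M av av = ∏ s, pauli (i s) 0 0 := rfl
  have hMbb : M bv bv = ∏ s, pauli (i s) 1 1 := rfl
  have hMab : M av bv = ∏ s, pauli (i s) 0 1 := rfl
  have hMba : M bv av = ∏ s, pauli (i s) 1 0 := rfl
  by_cases hz : ∀ s, i s ≠ 2
  · set m := (Finset.univ.filter fun s => i s = 1).card with hm
    have h00 : M av av = 0 := by
      rw [hMaa]; exact Finset.prod_eq_zero (Finset.mem_univ 0) (pauli00 _ (hz 0))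
    have h11 : M bv bv = 0 := by
      rw [hMbb]; exact Finset.prod_eq_zero (Finset.mem_univ 0) (pauli11 _ (hz 0))
    have h01 : M av bv = (-Complex.I) ^ m := by
      rw [hMab, Finset.prod_congr rfl (fun s _ => pauli01 _ (hz s)), Finset.prod_ite _ _,
        Finset.prod_const, Finset.prod_const, one_pow, mul_one]
    have h10 : M bv av = Complex.I ^ m := by
      rw [hMba, Finset.prod_congr rfl (fun s _ => pauli10 _ (hz s)), Finset.prod_ite _ _,
        Finset.prod_const, Finset.prod_const, one_pow, mul_one]
    rcases Nat.even_or_odd m with he | ho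
    · obtain ⟨k, hk⟩ := he
      have hIm : Complex.I ^ m = (((-1 : ℝ) ^ k : ℝ) : ℂ) := by
        rw [hk, ← two_mul, pow_mul, Complex.I_sq]; push_cast; ring
      have hIm' : (-Complex.I) ^ m = Complex.I ^ m := by
        rw [neg_pow, hk, ← two_mul, pow_mul, neg_one_sq, one_pow, one_mul]
      have htr2 : (rhoX5 x * M).trace = ((x * (-1 : ℝ) ^ k : ℝ) : ℂ) := by
        rw [htr, h00, h01, h10, h11, hIm', hIm]; push_cast; ring
      rw [htr2, Complex.ofReal_re, if_pos ⟨hz, ⟨k, hk⟩⟩, mul_pow, mul_one]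
      rw [← pow_mul, mul_comm k 2, pow_mul, neg_one_sq, one_pow, mul_one]
    · have h01' : (-Complex.I) ^ m = -(Complex.I ^ m) := Odd.neg_pow ho _
      have htr2 : (rhoX5 x * M).trace = 0 := by
        rw [htr, h00, h01, h10, h11, h01']; ring
      rw [htr2, Complex.zero_re, if_neg]
      · ring
      · rintro ⟨-, he⟩
        exact (Nat.not_even_iff_odd.mpr ho) he
  · push_neg at hz
    obtain ⟨s0, hs0⟩ := hz
    have h01 : M av bv = 0 := by
      rw [hMab]
      exact Finset.prod_eq_zero (Finset.mem_univ s0) (by rw [hs0]; exact pauli01_two)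
    have h10 : M bv av = 0 := by
      rw [hMba]
      exact Finset.prod_eq_zero (Finset.mem_univ s0) (by rw [hs0]; exact pauli10_two)
    have hrhs : (if (∀ s, i s ≠ 2) ∧ Even ((Finset.univ.filter fun s => i s = 1).card)
        then (1:ℝ) else 0) = 0 := by
      rw [if_neg]; rintro ⟨h, -⟩; exact h s0 hs0
    rw [hrhs, mul_zero]
    by_cases hall : ∀ s, i s = 2
    · have h00 : M av av = 1 := by
        rw [hMaa]
        have h' : ∀ s ∈ Finset.univ, pauli (i s) 0 0 = 1 := fun s _ => by
          rw [hall s]; exact pauli00_two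
        rw [Finset.prod_congr rfl h', Finset.prod_const_one]
      have h11 : M bv bv = -1 := by
        rw [hMbb]
        have h' : ∀ s ∈ Finset.univ, pauli (i s) 1 1 = (-1 : ℂ) := fun s _ => by
          rw [hall s]; exact pauli11_two
        rw [Finset.prod_congr rfl h', Finset.prod_const]
        norm_num
      have htr2 : (rhoX5 x * M).trace = 0 := by rw [htr, h00, h01, h10, h11]; ring
      rw [htr2, Complex.zero_re]; ring
    · push_neg at hall
      obtain ⟨s1, hs1⟩ := hall
      have h00 : M av av = 0 := by
        rw [hMaa]; exact Finset.prod_eq_zero (Finset.mem_univ s1) (pauli00 _ hs1)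
      have h11 : M bv bv = 0 := by
        rw [hMbb]; exact Finset.prod_eq_zero (Finset.mem_univ s1) (pauli11 _ hs1)
      have htr2 : (rhoX5 x * M).trace = 0 := by rw [htr, h00, h01, h10, h11]; ring
      rw [htr2, Complex.zero_re]; ring

lemma corrSq5_rho (x : ℝ) : corrSq5 (rhoX5 x) = 16 * x ^ 2 := by
  unfold corrSq5
  rw [Finset.sum_congr rfl (fun i _ => corr_entry x i), ← Finset.mul_sum]
  rw [Finset.sum_boole]
  have hcard : (Finset.univ.filter fun i : Fin 5 → Fin 3 =>
      (∀ s, i s ≠ 2) ∧ Even ((Finset.univ.filter fun s => i s = 1).card)).card = 16 := by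
    decide
  rw [hcard]
  norm_num
  ring


section PSD

variable {ι : Type*} [Fintype ι] [DecidableEq ι]

lemma herm_diag_real {ρ : Matrix ι ι ℂ} (h : ρ.IsHermitian) (a : ι) :
    ρ a a = (((ρ a a).re : ℝ) : ℂ) := (h.coe_re_apply_self a).symm

lemma psd_diag_re_nonneg {ρ : Matrix ι ι ℂ} (h : ρ.PosSemidef) (a : ι) :
    0 ≤ (ρ a a).re := by
  have h2 := h.re_dotProduct_nonneg (Pi.single a 1)
  simpa [dotProduct, Matrix.mulVec, Pi.single_apply, Finset.sum_ite_eq',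
    mul_ite, ite_mul] using h2

lemma dot_two (ρ : Matrix ι ι ℂ) {a b : ι} (hab : a ≠ b) (z w : ℂ) :
    dotProduct (star (fun u => if u = a then z else if u = b then w else 0))
      (ρ *ᵥ (fun u => if u = a then z else if u = b then w else 0))
    = star z * (ρ a a * z + ρ a b * w) + star w * (ρ b a * z + ρ b b * w) := by
  have hmv : ∀ u, (ρ *ᵥ (fun u => if u = a then z else if u = b then w else 0)) u
      = ρ u a * z + ρ u b * w := by
    intro u
    show (∑ y, ρ u y * (if y = a then z else if y = b then w else 0)) = _
    have key : ∀ y, ρ u y * (if y = a then z else if y = b then w else 0)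
        = (if y = a then ρ u y * z else 0) + (if y = b then ρ u y * w else 0) := by
      intro y
      by_cases h1 : y = a
      · subst h1; simp [hab]
      · by_cases h2 : y = b <;> simp [h1, h2, Ne.symm hab]
    rw [Finset.sum_congr rfl (fun y _ => key y), Finset.sum_add_distrib,
      Finset.sum_ite_eq' Finset.univ a (fun y => ρ u y * z),
      Finset.sum_ite_eq' Finset.univ b (fun y => ρ u y * w)]
    simp
  show (∑ u, star ((if u = a then z else if u = b then w else 0))
      * (ρ *ᵥ (fun u => if u = a then z else if u = b then w else 0)) u) = _
  rw [Finset.sum_congr rfl (fun u _ => by rw [hmv u])]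
  have key : ∀ u, star (if u = a then z else if u = b then w else 0) * (ρ u a * z + ρ u b * w)
      = (if u = a then star z * (ρ u a * z + ρ u b * w) else 0)
        + (if u = b then star w * (ρ u a * z + ρ u b * w) else 0) := by
    intro u
    by_cases h1 : u = a
    · subst h1; simp [hab]
    · by_cases h2 : u = b <;> simp [h1, h2, Ne.symm hab]
  rw [Finset.sum_congr rfl (fun u _ => key u), Finset.sum_add_distrib,
    Finset.sum_ite_eq' Finset.univ a, Finset.sum_ite_eq' Finset.univ b]
  simp

lemma quad_bound {p q n : ℝ} (hp : 0 ≤ p) (hq : 0 ≤ q) (hn : 0 ≤ n)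
    (h : ∀ s : ℝ, 0 ≤ s ^ 2 * p - 2 * s * n + n * q) : n ≤ p * q := by
  rcases eq_or_lt_of_le hn with h0 | hn'
  · nlinarith [mul_nonneg hp hq]
  · by_cases hp0 : p = 0
    · exfalso
      have := h (q + 1)
      rw [hp0] at this
      nlinarith
    · have hp' : 0 < p := lt_of_le_of_ne hp (Ne.symm hp0)
      have h3 := mul_nonneg hp'.le (h (n / p))
      have h4 : p * ((n / p) ^ 2 * p - 2 * (n / p) * n + n * q)
          = n ^ 2 - 2 * n ^ 2 + n * p * q := by
        field_simp
      rw [h4] at h3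
      nlinarith

lemma psd_offdiag {ρ : Matrix ι ι ℂ} (h : ρ.PosSemidef) {a b : ι} (hab : a ≠ b) :
    Complex.normSq (ρ a b) ≤ (ρ a a).re * (ρ b b).re := by
  set c := ρ a b with hc
  have hba : ρ b a = star c := by rw [hc, ← h.isHermitian.apply a b, star_star]
  apply quad_bound (psd_diag_re_nonneg h a) (psd_diag_re_nonneg h b) (Complex.normSq_nonneg c)
  intro s
  have h2 := h.dotProduct_mulVec_nonneg (fun u => if u = a then ((s : ℝ) : ℂ) else if u = b then -star c else 0)
  rw [dot_two ρ hab, hba] at h2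
  have h3 := (Complex.le_def.mp h2).1
  have him_a : (ρ a a).im = 0 := by rw [herm_diag_real h.isHermitian a]; simp
  have him_b : (ρ b b).im = 0 := by rw [herm_diag_real h.isHermitian b]; simp
  have h4 : (star ((s : ℝ) : ℂ) * (ρ a a * ((s : ℝ) : ℂ) + c * (-star c))
      + star (-star c) * (star c * ((s : ℝ) : ℂ) + ρ b b * (-star c))).re
      = s ^ 2 * (ρ a a).re - 2 * s * Complex.normSq c + Complex.normSq c * (ρ b b).re := by
    simp [Complex.star_def, Complex.mul_re, Complex.mul_im, Complex.add_re, Complex.add_im,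
      Complex.conj_re, Complex.conj_im, Complex.normSq_apply, him_a, him_b]
    ring
  rw [h4] at h3
  simpa using h3

end PSD


lemma bloch (r : Matrix (Fin 2) (Fin 2) ℂ) (hr : r.PosSemidef) (htr : r.trace = 1) :
    ∑ j : Fin 3, ((r * pauli j).trace).re ^ 2 ≤ 1 := by
  set p := (r 0 0).re with hp'
  set q := (r 1 1).re with hq'
  set c := r 0 1 with hc'
  have hdr : r 0 0 = ((p : ℝ) : ℂ) := herm_diag_real hr.isHermitian 0
  have hdq : r 1 1 = ((q : ℝ) : ℂ) := herm_diag_real hr.isHermitian 1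
  have h10 : r 1 0 = star c := by rw [hc', ← hr.isHermitian.apply 0 1, star_star]
  have hp : 0 ≤ p := psd_diag_re_nonneg hr 0
  have hq : 0 ≤ q := psd_diag_re_nonneg hr 1
  have hpq : Complex.normSq c ≤ p * q := psd_offdiag hr (by decide)
  have hsum : p + q = 1 := by
    have h1 : r 0 0 + r 1 1 = 1 := (Matrix.trace_fin_two r).symm.trans htr
    have h2 := congrArg Complex.re h1
    simpa [hp', hq'] using h2
  have e0 : ((r * pauli 0).trace) = c + star c := by
    rw [Matrix.trace_fin_two]
    simp [Matrix.mul_apply, Fin.sum_univ_two, pauli, h10]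
    exact hc'.symm
  have e1 : ((r * pauli 1).trace) = c * Complex.I - star c * Complex.I := by
    rw [Matrix.trace_fin_two]
    simp [Matrix.mul_apply, Fin.sum_univ_two, pauli, h10]
    ring
  have e2 : ((r * pauli 2).trace) = ((p : ℝ) : ℂ) - ((q : ℝ) : ℂ) := by
    rw [Matrix.trace_fin_two]
    simp [Matrix.mul_apply, Fin.sum_univ_two, pauli, hdr, hdq]
    ring
  rw [Fin.sum_univ_three, e0, e1, e2]
  have r0 : (c + star c).re = 2 * c.re := by
    simp [Complex.star_def, Complex.add_re]; ring
  have r1 : (c * Complex.I - star c * Complex.I).re = -2 * c.im := by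
    simp [Complex.star_def, Complex.sub_re, Complex.mul_re]; ring
  have r2 : (((p : ℝ) : ℂ) - ((q : ℝ) : ℂ)).re = p - q := by simp
  rw [r0, r1, r2]
  have hns : Complex.normSq c = c.re * c.re + c.im * c.im := Complex.normSq_apply c
  nlinarith [hpq, hsum, sq_nonneg (p - q), hns]


lemma prods_le_one {k : ℕ} (hk : 2 ≤ k) (p q : Fin k → ℝ)
    (hp : ∀ t, 0 ≤ p t) (hq : ∀ t, 0 ≤ q t) (hpq : ∀ t, p t + q t ≤ 1) :
    ∏ t, p t + ∏ t, q t + 2 * ∏ t, Real.sqrt (p t * q t) ≤ 1 := by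
  set A := ∏ t, Real.sqrt (p t) with hA
  set B := ∏ t, Real.sqrt (q t) with hB
  have hA2 : ∏ t, p t = A ^ 2 := by
    rw [hA, ← Finset.prod_pow]
    exact Finset.prod_congr rfl fun t _ => (Real.sq_sqrt (hp t)).symm
  have hB2 : ∏ t, q t = B ^ 2 := by
    rw [hB, ← Finset.prod_pow]
    exact Finset.prod_congr rfl fun t _ => (Real.sq_sqrt (hq t)).symm
  have hAB : ∏ t, Real.sqrt (p t * q t) = A * B := by
    rw [hA, hB, ← Finset.prod_mul_distrib]
    exact Finset.prod_congr rfl fun t _ => Real.sqrt_mul (hp t) _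
  have hA0 : 0 ≤ A := Finset.prod_nonneg fun t _ => Real.sqrt_nonneg _
  have hB0 : 0 ≤ B := Finset.prod_nonneg fun t _ => Real.sqrt_nonneg _
  set t0 : Fin k := ⟨0, by omega⟩ with ht0
  set t1 : Fin k := ⟨1, by omega⟩ with ht1
  have ht01 : t0 ≠ t1 := by simp [ht0, ht1, Fin.ext_iff]
  have hple1 : ∀ t, Real.sqrt (p t) ≤ 1 := fun t => Real.sqrt_le_one.mpr (by nlinarith [hq t, hpq t])
  have hqle1 : ∀ t, Real.sqrt (q t) ≤ 1 := fun t => Real.sqrt_le_one.mpr (by nlinarith [hp t, hpq t])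
  have hApair : A ≤ Real.sqrt (p t0) * Real.sqrt (p t1) := by
    have hsplit : A = (∏ t ∈ ({t0, t1} : Finset (Fin k)), Real.sqrt (p t))
        * ∏ t ∈ ({t0, t1} : Finset (Fin k))ᶜ, Real.sqrt (p t) :=
      (Finset.prod_mul_prod_compl _ _).symm
    rw [hsplit, Finset.prod_pair ht01]
    have h1 : (∏ t ∈ ({t0, t1} : Finset (Fin k))ᶜ, Real.sqrt (p t)) ≤ 1 :=
      Finset.prod_le_one (fun t _ => Real.sqrt_nonneg _) (fun t _ => hple1 t)
    have h2 : 0 ≤ Real.sqrt (p t0) * Real.sqrt (p t1) :=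
      mul_nonneg (Real.sqrt_nonneg _) (Real.sqrt_nonneg _)
    exact mul_le_of_le_one_right h2 h1
  have hBpair : B ≤ Real.sqrt (q t0) * Real.sqrt (q t1) := by
    have hsplit : B = (∏ t ∈ ({t0, t1} : Finset (Fin k)), Real.sqrt (q t))
        * ∏ t ∈ ({t0, t1} : Finset (Fin k))ᶜ, Real.sqrt (q t) :=
      (Finset.prod_mul_prod_compl _ _).symm
    rw [hsplit, Finset.prod_pair ht01]
    have h1 : (∏ t ∈ ({t0, t1} : Finset (Fin k))ᶜ, Real.sqrt (q t)) ≤ 1 :=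
      Finset.prod_le_one (fun t _ => Real.sqrt_nonneg _) (fun t _ => hqle1 t)
    have h2 : 0 ≤ Real.sqrt (q t0) * Real.sqrt (q t1) :=
      mul_nonneg (Real.sqrt_nonneg _) (Real.sqrt_nonneg _)
    exact mul_le_of_le_one_right h2 h1
  have key : A + B ≤ 1 := by
    have e0 : Real.sqrt (p t0) ^ 2 + Real.sqrt (q t0) ^ 2 ≤ 1 := by
      rw [Real.sq_sqrt (hp t0), Real.sq_sqrt (hq t0)]; exact hpq t0
    have e1 : Real.sqrt (p t1) ^ 2 + Real.sqrt (q t1) ^ 2 ≤ 1 := by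
      rw [Real.sq_sqrt (hp t1), Real.sq_sqrt (hq t1)]; exact hpq t1
    nlinarith [sq_nonneg (Real.sqrt (p t0) - Real.sqrt (p t1)),
      sq_nonneg (Real.sqrt (q t0) - Real.sqrt (q t1)), hApair, hBpair]
  rw [hA2, hB2, hAB]
  nlinarith [key, hA0, hB0]


lemma fid_prod_le_half {k : ℕ} (hk : 2 ≤ k) (P : Fin 5 → Fin k)
    (hne : ∀ t, Nonempty {s : Fin 5 // P s = t})
    {φ : Matrix V V ℂ} (hφ : ProdAcross P φ) :
    ((φ * vecMulVec ghz5 (star ghz5)).trace).re ≤ 1 / 2 := by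
  obtain ⟨ρB, hρB, hprod⟩ := hφ
  rw [trace_mul_ghzP]
  set c0 : (t : Fin k) → ({s : Fin 5 // P s = t} → Fin 2) := fun t _ => 0 with hc0'
  set c1 : (t : Fin k) → ({s : Fin 5 // P s = t} → Fin 2) := fun t _ => 1 with hc1'
  have h01 : ∀ t, c0 t ≠ c1 t := by
    intro t h
    obtain ⟨s⟩ := hne t
    have := congrFun h s
    simp [hc0', hc1'] at this
  set p : Fin k → ℝ := fun t => (ρB t (c0 t) (c0 t)).re with hpdef
  set q : Fin k → ℝ := fun t => (ρB t (c1 t) (c1 t)).re with hqdef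
  set c : Fin k → ℂ := fun t => ρB t (c0 t) (c1 t) with hcdef
  have hp : ∀ t, 0 ≤ p t := fun t => psd_diag_re_nonneg (hρB t).1 _
  have hq : ∀ t, 0 ≤ q t := fun t => psd_diag_re_nonneg (hρB t).1 _
  have hpq1 : ∀ t, p t + q t ≤ 1 := by
    intro t
    have htr1 : (∑ u, (ρB t u u).re) = 1 := by
      have h2 := congrArg Complex.re ((hρB t).2)
      rw [Matrix.trace] at h2
      simpa [Complex.re_sum] using h2
    have hsub : ({c0 t, c1 t} : Finset _) ⊆ Finset.univ := Finset.subset_univ _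
    have hle := Finset.sum_le_sum_of_subset_of_nonneg hsub
      (fun u _ _ => psd_diag_re_nonneg (hρB t).1 u)
    rw [Finset.sum_pair (h01 t), htr1] at hle
    exact hle
  have hnormc : ∀ t, ‖c t‖ ≤ Real.sqrt (p t * q t) := by
    intro t
    rw [Complex.norm_def]
    exact Real.sqrt_le_sqrt (psd_offdiag (hρB t).1 (h01 t))
  have hφaa : φ av av = ((∏ t, p t : ℝ) : ℂ) := by
    rw [hprod av av]
    push_cast
    exact Finset.prod_congr rfl fun t _ => herm_diag_real (hρB t).1.isHermitian _
  have hφbb : φ bv bv = ((∏ t, q t : ℝ) : ℂ) := by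
    rw [hprod bv bv]
    push_cast
    exact Finset.prod_congr rfl fun t _ => herm_diag_real (hρB t).1.isHermitian _
  have hφab : φ av bv = ∏ t, c t := hprod av bv
  have hφba : φ bv av = star (∏ t, c t) := by
    rw [hprod bv av, star_prod]
    exact Finset.prod_congr rfl fun t _ => by
      show ρB t (c1 t) (c0 t) = star (ρB t (c0 t) (c1 t))
      rw [← (hρB t).1.isHermitian.apply (c0 t) (c1 t), star_star]
  rw [hφaa, hφbb, hφab, hφba]
  set C := ∏ t, c t with hC
  set Pp := (∏ t, p t : ℝ) with hPp
  set Qq := (∏ t, q t : ℝ) with hQq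
  have hre : ((1 / 2 : ℂ) * (((Pp : ℝ) : ℂ) + C + star C + ((Qq : ℝ) : ℂ))).re
      = 1 / 2 * (Pp + Qq + 2 * C.re) := by
    simp [Complex.star_def, Complex.add_re, Complex.mul_re, Complex.add_im]
    ring
  rw [hre]
  have hCre : C.re ≤ ∏ t, Real.sqrt (p t * q t) := by
    refine le_trans (Complex.re_le_norm C) ?_
    rw [hC, norm_prod]
    exact Finset.prod_le_prod (fun t _ => norm_nonneg _) (fun t _ => hnormc t)
  have := prods_le_one hk p q hp hq hpq1
  nlinarith [hCre, this]


lemma fid_sep_le_half {k : ℕ} (hk : 2 ≤ k) (P : Fin 5 → Fin k)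
    (hne : ∀ t, Nonempty {s : Fin 5 // P s = t})
    {ρ : Matrix V V ℂ} (hsep : SepAcross P ρ) :
    ((ρ * vecMulVec ghz5 (star ghz5)).trace).re ≤ 1 / 2 := by
  obtain ⟨N, pr, φ, hpr, hsum, hφ, rfl⟩ := hsep
  rw [Finset.sum_mul]
  have : (∑ i, ((pr i : ℂ) • φ i) * vecMulVec ghz5 (star ghz5)).trace
      = ∑ i, (pr i : ℂ) * ((φ i * vecMulVec ghz5 (star ghz5)).trace) := by
    rw [trace_sum]
    exact Finset.sum_congr rfl fun i _ => by rw [smul_mul_assoc, trace_smul, smul_eq_mul]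
  rw [this, Complex.re_sum]
  have hbd : ∀ i ∈ Finset.univ, ((pr i : ℂ) * ((φ i * vecMulVec ghz5 (star ghz5)).trace)).re
      ≤ pr i * (1 / 2) := by
    intro i _
    rw [Complex.re_ofReal_mul]
    exact mul_le_mul_of_nonneg_left (fid_prod_le_half hk P hne (hφ i).2.2.2) (hpr i)
  calc ∑ i, ((pr i : ℂ) * ((φ i * vecMulVec ghz5 (star ghz5)).trace)).re
      ≤ ∑ i, pr i * (1 / 2) := Finset.sum_le_sum hbd
    _ = 1 / 2 := by rw [← Finset.sum_mul, hsum, one_mul]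

lemma fid_rho (x : ℝ) :
    ((rhoX5 x * vecMulVec ghz5 (star ghz5)).trace).re = x + (1 - x) / 32 := by
  have hGG : (vecMulVec ghz5 (star ghz5) * vecMulVec ghz5 (star ghz5)).trace = 1 := by
    rw [trace_mul_ghzP]
    have hval : ∀ u v : V, (u = av ∨ u = bv) → (v = av ∨ v = bv) →
        vecMulVec ghz5 (star ghz5) u v = cst * cst := by
      intro u v hu hv
      rw [Matrix.vecMulVec_apply, star_ghz5]
      rcases hu with h | h <;> rcases hv with h' | h' <;>
        rw [h, h'] <;> simp [ghz5_av, ghz5_bv]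
    rw [hval av av (Or.inl rfl) (Or.inl rfl), hval av bv (Or.inl rfl) (Or.inr rfl),
      hval bv av (Or.inr rfl) (Or.inl rfl), hval bv bv (Or.inr rfl) (Or.inr rfl), cst_sq]
    norm_num
  have h1 : (rhoX5 x * vecMulVec ghz5 (star ghz5)).trace
      = (x : ℂ) * 1 + (((1 - x) / 32 : ℝ) : ℂ) * 1 := by
    rw [rhoX5, add_mul, smul_mul_assoc, smul_mul_assoc, one_mul, trace_add, trace_smul,
      trace_smul, hGG, trace_ghzP]
    simp [smul_eq_mul]
  rw [h1]
  simp


lemma trace_mul_expand {n : Type*} [Fintype n] (A B : Matrix n n ℂ) :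
    (A * B).trace = ∑ a, ∑ b, A a b * B b a := by
  rw [Matrix.trace]
  exact Finset.sum_congr rfl fun a _ => by rw [Matrix.diag_apply, Matrix.mul_apply]

lemma pauli_conj (j : Fin 3) (a b : Fin 2) : star (pauli j a b) = pauli j b a := by
  fin_cases j <;> fin_cases a <;> fin_cases b <;> simp [pauli]

lemma corr_prod_le_one {P : Fin 5 → Fin 5}
    (hcard : ∀ t, Fintype.card {s : Fin 5 // P s = t} = 1)
    {φ : Matrix V V ℂ} (hφ : ProdAcross P φ) : corrSq5 φ ≤ 1 := by
  obtain ⟨ρB, hρB, hprod⟩ := hφ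
  have hu : ∀ t, ∃ s : {s : Fin 5 // P s = t}, ∀ y, y = s := fun t =>
    Fintype.card_eq_one_iff.mp (hcard t)
  choose σf hσ using hu
  set u : Fin 5 → Fin 5 := fun t => (σf t).1 with hu'
  have hPu : ∀ t, P (u t) = t := fun t => (σf t).2
  have huP : ∀ s, u (P s) = s := fun s => (congrArg Subtype.val (hσ (P s) ⟨s, rfl⟩)).symm
  set e : Equiv (Fin 5) (Fin 5) := ⟨u, P, hPu, huP⟩ with he
  set r : Fin 5 → Matrix (Fin 2) (Fin 2) ℂ :=
    fun t => Matrix.of (fun a b => ρB t (fun _ => a) (fun _ => b)) with hr'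
  have hrpsd : ∀ t, (r t).PosSemidef := fun t =>
    ((hρB t).1).submatrix (fun a : Fin 2 => ((fun _ => a) : {s : Fin 5 // P s = t} → Fin 2))
  haveI hUniq : ∀ t, Unique {s : Fin 5 // P s = t} := fun t => ⟨⟨σf t⟩, fun y => hσ t y⟩
  have hrtr : ∀ t, (r t).trace = 1 := by
    intro t
    have h1 : (ρB t).trace = 1 := (hρB t).2
    rw [Matrix.trace] at h1
    have h2 : ∑ w : {s : Fin 5 // P s = t} → Fin 2, (ρB t).diag w = ∑ a : Fin 2, r t a a := by
      apply Fintype.sum_equiv (Equiv.funUnique {s : Fin 5 // P s = t} (Fin 2))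
      intro w
      show ρB t w w = r t (w default) (w default)
      have hw : w = fun _ => w default := by
        funext z
        rw [Unique.eq_default z]
      conv_lhs => rw [hw]
      rfl
    rw [h2] at h1
    rw [Matrix.trace]
    exact h1
  have htr_real : ∀ (t : Fin 5) (j : Fin 3),
      ((r t * pauli j).trace) = ((((r t * pauli j).trace).re : ℝ) : ℂ) := by
    intro t j
    have hermr : ∀ a b, star (r t a b) = r t b a := fun a b => (hrpsd t).isHermitian.apply b a
    have e1 : (r t * pauli j).trace = r t 0 0 * pauli j 0 0 + r t 0 1 * pauli j 1 0
        + r t 1 0 * pauli j 0 1 + r t 1 1 * pauli j 1 1 := by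
      rw [trace_mul_expand]
      rw [Fin.sum_univ_two, Fin.sum_univ_two, Fin.sum_univ_two]
      ring
    have hconj : star ((r t * pauli j).trace) = (r t * pauli j).trace := by
      rw [e1, star_add, star_add, star_add, star_mul', star_mul', star_mul', star_mul',
        hermr, hermr, hermr, hermr, pauli_conj, pauli_conj, pauli_conj, pauli_conj]
      ring
    exact (Complex.conj_eq_iff_re.mp hconj).symm
  have hφr : ∀ x y : V, φ x y = ∏ t, r t (x (u t)) (y (u t)) := by
    intro x y
    rw [hprod x y]
    apply Finset.prod_congr rfl
    intro t _
    have hx : (fun s : {s : Fin 5 // P s = t} => x s.1) = (fun _ => x (u t)) := by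
      funext z
      rw [hσ t z]
    have hy : (fun s : {s : Fin 5 // P s = t} => y s.1) = (fun _ => y (u t)) := by
      funext z
      rw [hσ t z]
    rw [hx, hy]
    rfl
  have htrace_prod : ∀ i : Fin 5 → Fin 3,
      ((φ * Matrix.of fun (x y : V) => ∏ s, pauli (i s) (x s) (y s)).trace)
        = ∏ t, (r t * pauli (i (u t))).trace := by
    intro i
    rw [trace_mul_expand]
    have step1 : ∀ x y : V, φ x y * (Matrix.of fun (x y : V) => ∏ s, pauli (i s) (x s) (y s)) y x
        = ∏ t, (r t (x (u t)) (y (u t)) * pauli (i (u t)) (y (u t)) (x (u t))) := by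
      intro x y
      rw [Matrix.of_apply, hφr x y, Finset.prod_mul_distrib]
      congr 1
      exact (Equiv.prod_comp e (fun s => pauli (i s) (y s) (x s))).symm
    rw [Finset.sum_congr rfl (fun x _ => Finset.sum_congr rfl (fun y _ => step1 x y))]
    have step2 : ∀ x : V, ∑ y : V, ∏ t, (r t (x (u t)) (y (u t)) * pauli (i (u t)) (y (u t)) (x (u t)))
        = ∏ t, ∑ b : Fin 2, (r t (x (u t)) b * pauli (i (u t)) b (x (u t))) := by
      intro x
      rw [Fintype.prod_sum (fun t (b : Fin 2) => r t (x (u t)) b * pauli (i (u t)) b (x (u t)))]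
      apply Fintype.sum_equiv (Equiv.arrowCongr e.symm (Equiv.refl (Fin 2)))
      intro y
      rfl
    rw [Finset.sum_congr rfl (fun x _ => step2 x)]
    have step3 : ∑ x : V, ∏ t, ∑ b : Fin 2, (r t (x (u t)) b * pauli (i (u t)) b (x (u t)))
        = ∏ t, ∑ a : Fin 2, ∑ b : Fin 2, (r t a b * pauli (i (u t)) b a) := by
      rw [Fintype.prod_sum (fun t (a : Fin 2) => ∑ b : Fin 2, r t a b * pauli (i (u t)) b a)]
      apply Fintype.sum_equiv (Equiv.arrowCongr e.symm (Equiv.refl (Fin 2)))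
      intro x
      rfl
    rw [step3]
    exact Finset.prod_congr rfl fun t _ => (trace_mul_expand _ _).symm
  unfold corrSq5
  have hterm : ∀ i : Fin 5 → Fin 3,
      (Complex.re ((φ * Matrix.of fun (x y : V) => ∏ s, pauli (i s) (x s) (y s)).trace)) ^ 2
        = ∏ t, (((r t * pauli (i (u t))).trace).re) ^ 2 := by
    intro i
    rw [htrace_prod i]
    have hcast : (∏ t, (r t * pauli (i (u t))).trace)
        = (((∏ t, ((r t * pauli (i (u t))).trace).re : ℝ)) : ℂ) := by
      push_cast
      exact Finset.prod_congr rfl fun t _ => htr_real t _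
    rw [hcast, Complex.ofReal_re, ← Finset.prod_pow]
  rw [Finset.sum_congr rfl (fun i _ => hterm i)]
  have hswap : ∑ i : Fin 5 → Fin 3, ∏ t, (((r t * pauli (i (u t))).trace).re) ^ 2
      = ∏ t, ∑ j : Fin 3, (((r t * pauli j).trace).re) ^ 2 := by
    rw [Fintype.prod_sum (fun t (j : Fin 3) => (((r t * pauli j).trace).re) ^ 2)]
    apply Fintype.sum_equiv (Equiv.arrowCongr e.symm (Equiv.refl (Fin 3)))
    intro i
    rfl
  rw [hswap]
  refine Finset.prod_le_one (fun t _ => Finset.sum_nonneg fun j _ => sq_nonneg _)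
    (fun t _ => bloch (r t) (hrpsd t) (hrtr t))


lemma corrSq5_convex {N : ℕ} (pr : Fin N → ℝ) (φ : Fin N → Matrix V V ℂ)
    (hp : ∀ i, 0 ≤ pr i) (hsum : ∑ i, pr i = 1) (hb : ∀ i, corrSq5 (φ i) ≤ 1) :
    corrSq5 (∑ i, (pr i : ℂ) • φ i) ≤ 1 := by
  classical
  set T : Matrix V V ℂ → EuclideanSpace ℝ (Fin 5 → Fin 3) := fun σm => WithLp.toLp 2 (fun i =>
    Complex.re ((σm * Matrix.of fun (x y : V) => ∏ s, pauli (i s) (x s) (y s)).trace)) with hT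
  have hcorr : ∀ σm, corrSq5 σm = ‖T σm‖ ^ 2 := by
    intro σm
    rw [EuclideanSpace.norm_eq, Real.sq_sqrt (Finset.sum_nonneg fun i _ => sq_nonneg _)]
    unfold corrSq5
    exact Finset.sum_congr rfl fun i _ => by rw [Real.norm_eq_abs, sq_abs]
  have hlin : T (∑ i, (pr i : ℂ) • φ i) = ∑ i, pr i • T (φ i) := by
    ext j
    have h1 : ((∑ i, (pr i : ℂ) • φ i) * Matrix.of fun (x y : V) =>
        ∏ s, pauli (j s) (x s) (y s)).trace
        = ∑ i, (pr i : ℂ) * ((φ i * Matrix.of fun (x y : V) =>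
            ∏ s, pauli (j s) (x s) (y s)).trace) := by
      rw [Finset.sum_mul, trace_sum]
      exact Finset.sum_congr rfl fun i _ => by rw [smul_mul_assoc, trace_smul, smul_eq_mul]
    show Complex.re _ = (∑ i, pr i • T (φ i)) j
    rw [WithLp.ofLp_sum, Finset.sum_apply, h1, Complex.re_sum]
    exact Finset.sum_congr rfl fun i _ => by
      rw [Complex.re_ofReal_mul]
      rfl
  rw [hcorr, hlin]
  have hnorm : ‖∑ i, pr i • T (φ i)‖ ≤ 1 := by
    calc ‖∑ i, pr i • T (φ i)‖ ≤ ∑ i, ‖pr i • T (φ i)‖ := norm_sum_le _ _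
      _ = ∑ i, pr i * ‖T (φ i)‖ := Finset.sum_congr rfl fun i _ => by
          rw [norm_smul, Real.norm_eq_abs, abs_of_nonneg (hp i)]
      _ ≤ ∑ i, pr i * 1 := Finset.sum_le_sum fun i _ => by
          have h2 : ‖T (φ i)‖ ^ 2 ≤ 1 := by rw [← hcorr]; exact hb i
          have h3 : ‖T (φ i)‖ ≤ 1 := by nlinarith [norm_nonneg (T (φ i))]
          exact mul_le_mul_of_nonneg_left h3 (hp i)
      _ = 1 := by simp [hsum]
  nlinarith [hnorm, norm_nonneg (∑ i, pr i • T (φ i))]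


lemma hne_of_sizes {k : ℕ} (P : Fin 5 → Fin k) (S : Multiset ℕ) (hP : blockSizes P = S)
    (hpos : ∀ n ∈ S, 0 < n) : ∀ t, Nonempty {s : Fin 5 // P s = t} := by
  intro t
  have hmem : Fintype.card {s : Fin 5 // P s = t} ∈ blockSizes P :=
    Multiset.mem_map_of_mem _ (by simp)
  rw [hP] at hmem
  exact Fintype.card_pos_iff.mp (hpos _ hmem)

lemma no_sep {x : ℝ} (hx : 15 / 31 < x) {k : ℕ} (hk : 2 ≤ k) (P : Fin 5 → Fin k)
    (hne : ∀ t, Nonempty {s : Fin 5 // P s = t}) : ¬ SepAcross P (rhoX5 x) := by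
  intro hsep
  have h1 := fid_sep_le_half hk P hne hsep
  rw [fid_rho] at h1
  linarith

end GhzAux

open GhzAux

/-- for ρ_x = x|GHZ₅⟩⟨GHZ₅| + ((1−x)/32)I₃₂, the five-body correlation
tensor satisfies ‖T^{(12345)}‖² = 16x²; consequently ρ_x is not 1-1-1-1-1 separable for
x > 1/4, not 1-1-3 separable for x > 1/2, not 1-4 nor 1-2-2 separable for x > 3/4, and
not 2-3 separable for x > √3/2. -/
theorem ghz5_mixture_correlation_and_separability (x : ℝ) (hx0 : 0 ≤ x) (hx1 : x ≤ 1) :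
    corrSq5 (rhoX5 x) = 16 * x ^ 2 ∧
    (x > 1 / 4 → ∀ P : Fin 5 → Fin 5,
      blockSizes P = ({1, 1, 1, 1, 1} : Multiset ℕ) → ¬ SepAcross P (rhoX5 x)) ∧
    (x > 1 / 2 → ∀ P : Fin 5 → Fin 3,
      blockSizes P = ({1, 1, 3} : Multiset ℕ) → ¬ SepAcross P (rhoX5 x)) ∧
    (x > 3 / 4 →
      (∀ P : Fin 5 → Fin 2, blockSizes P = ({1, 4} : Multiset ℕ) → ¬ SepAcross P (rhoX5 x)) ∧
      (∀ P : Fin 5 → Fin 3, blockSizes P = ({1, 2, 2} : Multiset ℕ) → ¬ SepAcross P (rhoX5 x))) ∧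
    (x > Real.sqrt 3 / 2 → ∀ P : Fin 5 → Fin 2,
      blockSizes P = ({2, 3} : Multiset ℕ) → ¬ SepAcross P (rhoX5 x)) := by
  refine ⟨corrSq5_rho x, ?_, ?_, ?_, ?_⟩
  · intro hx P hP hsep
    have hcard : ∀ t, Fintype.card {s : Fin 5 // P s = t} = 1 := by
      intro t
      have hmem : Fintype.card {s : Fin 5 // P s = t} ∈ blockSizes P :=
        Multiset.mem_map_of_mem _ (by simp)
      rw [hP] at hmem
      simpa using hmem
    obtain ⟨N, pr, φ, hpr, hsum, hφ, hrho⟩ := hsep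
    have hle : corrSq5 (rhoX5 x) ≤ 1 := by
      rw [hrho]
      exact corrSq5_convex pr φ hpr hsum (fun i => corr_prod_le_one hcard (hφ i).2.2.2)
    rw [corrSq5_rho] at hle
    nlinarith [hx]
  · intro hx P hP
    exact no_sep (by norm_num; linarith) (by norm_num) P
      (hne_of_sizes P _ hP (by decide))
  · intro hx
    constructor
    · intro P hP
      exact no_sep (by norm_num; linarith) (by norm_num) P
        (hne_of_sizes P _ hP (by decide))
    · intro P hP
      exact no_sep (by norm_num; linarith) (by norm_num) P
        (hne_of_sizes P _ hP (by decide))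
  · intro hx P hP
    have hs3 : (1 : ℝ) ≤ Real.sqrt 3 := by
      have h1 := Real.sqrt_le_sqrt (by norm_num : (1 : ℝ) ≤ 3)
      rwa [Real.sqrt_one] at h1
    exact no_sep (by nlinarith [hx, hs3]) (by norm_num) P
      (hne_of_sizes P _ hP (by decide))
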